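/- Let $\alpha \in (0,1)$, $C_0 > 0$, $t_1 > 0$, and let $g : [0, t_1] \to \mathbb{R}$ be continuous on $[0,t_1]$ and differentiable on $(0, t_1)$ with $|g'(s)| \le C_0\, s^{\alpha-1}$ for all $s \in (0, t_1)$. Then the right rectangle rule error satisfies $\Big| t_1\, g(t_1) - \int_0^{t_1} g(s)\, ds \Big| \le \frac{C_0}{\alpha(\alpha+1)}\; t_1^{\,1+\alpha}.$ -/

import Mathlib

open MeasureTheory intervalIntegral Set


/-- Right rectangle rule error for a function with a weak singularity of its
derivative at `0`: if `g` is continuous on `[0,t₁]`, differentiable on `(0,t₁)`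
with `|g'(s)| ≤ C₀ s^(α-1)`, then
`|t₁ g(t₁) - ∫₀^{t₁} g| ≤ C₀/(α(α+1)) * t₁^(1+α)`. -/
theorem right_rectangle_rule_error
    (α C₀ t₁ : ℝ) (hα : α ∈ Set.Ioo (0 : ℝ) 1) (hC₀ : 0 < C₀) (ht₁ : 0 < t₁)
    (g g' : ℝ → ℝ)
    (hcont : ContinuousOn g (Set.Icc 0 t₁))
    (hderiv : ∀ s ∈ Set.Ioo (0 : ℝ) t₁, HasDerivAt g (g' s) s)
    (hbound : ∀ s ∈ Set.Ioo (0 : ℝ) t₁, |g' s| ≤ C₀ * s ^ (α - 1)) :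
    |t₁ * g t₁ - ∫ s in (0 : ℝ)..t₁, g s| ≤ C₀ / (α * (α + 1)) * t₁ ^ (1 + α) := by
  obtain ⟨hα0, hα1⟩ := hα
  have hα1' : (-1 : ℝ) < α - 1 := by linarith
  have hderiv' : ∀ x ∈ Set.Ioo (0:ℝ) t₁, deriv g x = g' x := fun x hx => (hderiv x hx).deriv
  -- integrability of g' on [s, t₁] for 0 < s < t₁
  have hint : ∀ s, 0 < s → s < t₁ → IntervalIntegrable g' volume s t₁ := by
    intro s hs0 hst
    rw [intervalIntegrable_iff_integrableOn_Ioo_of_le hst.le]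
    have hbdd : IntegrableOn (fun u => C₀ * u ^ (α - 1)) (Set.Ioo s t₁) volume := by
      have h1 : IntervalIntegrable (fun u => C₀ * u ^ (α - 1)) volume s t₁ :=
        (intervalIntegral.intervalIntegrable_rpow' hα1').const_mul C₀
      exact (intervalIntegrable_iff_integrableOn_Ioo_of_le hst.le).mp h1
    apply MeasureTheory.Integrable.mono hbdd
    · apply ((measurable_deriv g).aestronglyMeasurable.restrict).congr
      exact (MeasureTheory.ae_restrict_iff' measurableSet_Ioo).mpr
        (.of_forall fun x hx => hderiv' x ⟨hs0.trans hx.1, hx.2⟩)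
    · rw [MeasureTheory.ae_restrict_iff' measurableSet_Ioo]
      refine .of_forall fun x hx => ?_
      have hx' : x ∈ Set.Ioo (0:ℝ) t₁ := ⟨hs0.trans hx.1, hx.2⟩
      calc ‖g' x‖ ≤ C₀ * x ^ (α - 1) := hbound x hx'
        _ ≤ ‖C₀ * x ^ (α - 1)‖ := le_abs_self _
  -- pointwise estimate
  have key : ∀ s ∈ Set.Ioo (0:ℝ) t₁, |g t₁ - g s| ≤ C₀ / α * (t₁ ^ α - s ^ α) := by
    intro s hs
    obtain ⟨hs0, hst⟩ := hs
    have hftc : g t₁ - g s = ∫ u in s..t₁, g' u :=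
      (intervalIntegral.integral_eq_sub_of_hasDeriv_right_of_le hst.le
        (hcont.mono (Set.Icc_subset_Icc hs0.le le_rfl))
        (fun x hx => (hderiv x ⟨hs0.trans hx.1, hx.2⟩).hasDerivWithinAt)
        (hint s hs0 hst)).symm
    rw [hftc]
    have hae : ∀ᵐ x ∂(volume.restrict (Set.uIoc s t₁)), ‖g' x‖ ≤ C₀ * x ^ (α - 1) := by
      rw [Set.uIoc_of_le hst.le, ← MeasureTheory.restrict_Ioo_eq_restrict_Ioc,
        MeasureTheory.ae_restrict_iff' measurableSet_Ioo]
      exact .of_forall fun x hx => hbound x ⟨hs0.trans hx.1, hx.2⟩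
    have h1 : |∫ u in s..t₁, g' u| ≤ |∫ u in s..t₁, C₀ * u ^ (α - 1)| :=
      intervalIntegral.norm_integral_le_abs_of_norm_le hae
        ((intervalIntegral.intervalIntegrable_rpow' hα1').const_mul C₀)
    have h2 : (∫ u in s..t₁, C₀ * u ^ (α - 1)) = C₀ / α * (t₁ ^ α - s ^ α) := by
      rw [intervalIntegral.integral_const_mul, integral_rpow (Or.inl hα1')]
      have : α - 1 + 1 = α := by ring
      rw [this]
      ring
    calc |∫ u in s..t₁, g' u| ≤ |∫ u in s..t₁, C₀ * u ^ (α - 1)| := h1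
      _ = |C₀ / α * (t₁ ^ α - s ^ α)| := by rw [h2]
      _ = C₀ / α * (t₁ ^ α - s ^ α) := by
          rw [abs_of_nonneg]
          have h5 : s ^ α ≤ t₁ ^ α := Real.rpow_le_rpow hs0.le hst.le hα0.le
          have h6 : 0 ≤ C₀ / α := by positivity
          nlinarith
  -- rewrite the error as an integral
  have hgint : IntervalIntegrable g volume 0 t₁ :=
    (hcont.mono (by rw [Set.uIcc_of_le ht₁.le])).intervalIntegrable
  have heq : t₁ * g t₁ - ∫ s in (0:ℝ)..t₁, g s = ∫ s in (0:ℝ)..t₁, (g t₁ - g s) := by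
    rw [intervalIntegral.integral_sub intervalIntegrable_const hgint,
      intervalIntegral.integral_const]
    simp [mul_comm]
  rw [heq]
  have hbint : IntervalIntegrable (fun s => C₀ / α * (t₁ ^ α - s ^ α)) volume 0 t₁ := by
    apply IntervalIntegrable.const_mul
    exact intervalIntegrable_const.sub (intervalIntegral.intervalIntegrable_rpow' (by linarith))
  have hae2 : ∀ᵐ x ∂(volume.restrict (Set.uIoc (0:ℝ) t₁)),
      ‖g t₁ - g x‖ ≤ C₀ / α * (t₁ ^ α - x ^ α) := by
    rw [Set.uIoc_of_le ht₁.le, ← MeasureTheory.restrict_Ioo_eq_restrict_Ioc,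
      MeasureTheory.ae_restrict_iff' measurableSet_Ioo]
    exact .of_forall fun x hx => key x hx
  have h3 : |∫ s in (0:ℝ)..t₁, (g t₁ - g s)| ≤ |∫ s in (0:ℝ)..t₁, C₀ / α * (t₁ ^ α - s ^ α)| :=
    intervalIntegral.norm_integral_le_abs_of_norm_le hae2 hbint
  have h4 : (∫ s in (0:ℝ)..t₁, C₀ / α * (t₁ ^ α - s ^ α)) = C₀ / (α + 1) * t₁ ^ (1 + α) := by
    rw [intervalIntegral.integral_const_mul, intervalIntegral.integral_sub
      intervalIntegrable_const (intervalIntegral.intervalIntegrable_rpow' (by linarith)),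
      intervalIntegral.integral_const, integral_rpow (Or.inl (by linarith))]
    have h0 : (0:ℝ) ^ (α + 1) = 0 := Real.zero_rpow (by positivity)
    have hadd : t₁ ^ (1 + α) = t₁ ^ α * t₁ := by
      rw [add_comm, Real.rpow_add_one ht₁.ne']
    have hadd' : t₁ ^ (α + 1) = t₁ ^ α * t₁ := Real.rpow_add_one ht₁.ne' α
    rw [h0, hadd, hadd']
    field_simp
    ring
  have hT : (0:ℝ) ≤ t₁ ^ (1 + α) := by positivity
  calc |∫ s in (0:ℝ)..t₁, (g t₁ - g s)| ≤ |C₀ / (α + 1) * t₁ ^ (1 + α)| := by rw [← h4]; exact h3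
    _ = C₀ / (α + 1) * t₁ ^ (1 + α) := by rw [abs_of_nonneg (by positivity)]
    _ ≤ C₀ / (α * (α + 1)) * t₁ ^ (1 + α) := by
        apply mul_le_mul_of_nonneg_right _ hT
        apply div_le_div_of_nonneg_left hC₀.le (by positivity)
        nlinarith
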